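/- arXiv:1110.4441 — 2 statements merged into one kernel-verified Lean document; each statement's English description precedes it below -/
import Mathlib

section
/- Let β > 0 and consider minimizing over real parameters h, k, p, q (with 0 < k < 2) the function L(h,k,p,q) = [p² + h²q²/(1−(1−k)²)] + ξ·h²/(1−(1−k)²) + γ·α⁻²[(1−h−p)² + h²(k−q)²/(1−(1−k)²)], where β = γ/(ξ(γ+α²)) and ξ, γ, α > 0. The minimum is attained at p = q = ξ(√(4β+1)−1)/2, h = (2β+1−√(4β+1))/(2β), k = (√(4β+1)−1)/(2β), and at this minimum h + k = 1. -/
open Real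

/-- The per-frequency LQ Lagrangian
`L(h,k,p,q) = [p² + h²q²/(1-(1-k)²)] + ξ h²/(1-(1-k)²)
  + γ α⁻² [(1-h-p)² + h²(k-q)²/(1-(1-k)²)]`. -/
noncomputable def lqLagrangian (ξ γ α : ℝ) (h k p q : ℝ) : ℝ :=
  (p ^ 2 + h ^ 2 * q ^ 2 / (1 - (1 - k) ^ 2)) + ξ * h ^ 2 / (1 - (1 - k) ^ 2)
    + γ * (α ^ 2)⁻¹ * ((1 - h - p) ^ 2 + h ^ 2 * (k - q) ^ 2 / (1 - (1 - k) ^ 2))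

/-- If a positive multiple of `T` equals a nonnegative number, then `T` is nonnegative. -/
private lemma aux_nonneg_of_mul {x T u : ℝ} (hx : 0 < x) (key : x * T = u) (hu : 0 ≤ u) :
    0 ≤ T := by
  rcases le_or_gt 0 T with h | h
  · exact h
  · exfalso
    have : x * T < 0 := mul_neg_of_pos_of_neg hx h
    rw [key] at this
    linarith

set_option maxHeartbeats 1000000 in
/-- **Optimal LQ filters for transitive networks.** With `β = γ/(ξ(γ+α²))`, the minimum
of the per-frequency Lagrangian over `h, k, p, q` (with `0 < k < 2`) is attained at
`p = q = ξ(√(4β+1)-1)/2`, `h = (2β+1-√(4β+1))/(2β)`, `k = (√(4β+1)-1)/(2β)`,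
and at this minimum `h + k = 1`. -/
theorem lq_lagrangian_minimizer (ξ γ α : ℝ) (hξ : 0 < ξ) (hγ : 0 < γ) (hα : 0 < α)
    (β : ℝ) (hβ : β = γ / (ξ * (γ + α ^ 2)))
    (pstar hstar kstar : ℝ)
    (hp : pstar = ξ * (Real.sqrt (4 * β + 1) - 1) / 2)
    (hh : hstar = (2 * β + 1 - Real.sqrt (4 * β + 1)) / (2 * β))
    (hk : kstar = (Real.sqrt (4 * β + 1) - 1) / (2 * β)) :
    (0 < kstar ∧ kstar < 2) ∧
    (∀ h k p q : ℝ, 0 < k → k < 2 →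
      lqLagrangian ξ γ α hstar kstar pstar pstar ≤ lqLagrangian ξ γ α h k p q) ∧
    hstar + kstar = 1 := by
  have hα2 : (0:ℝ) < α ^ 2 := by positivity
  have hβpos : 0 < β := by rw [hβ]; positivity
  set c : ℝ := γ * (α ^ 2)⁻¹ with hcdef
  have hcpos : 0 < c := by positivity
  have hac : β * ξ * (1 + c) = c := by
    rw [hβ, hcdef]
    field_simp
    ring
  have h4β : (0:ℝ) ≤ 4 * β + 1 := by linarith
  set s : ℝ := Real.sqrt (4 * β + 1) with hs
  have hs2 : s ^ 2 = 4 * β + 1 := Real.sq_sqrt h4β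
  have hs0 : 0 ≤ s := Real.sqrt_nonneg _
  have hs1 : 1 < s := by nlinarith [hs2, hs0, hβpos]
  have hk0 : 0 < kstar := by
    rw [hk]; apply div_pos <;> linarith
  have hk1 : kstar < 1 := by
    rw [hk, div_lt_one (by linarith)]
    have : s < 2 * β + 1 := by
      rw [hs]
      rw [show (2 * β + 1 : ℝ) = Real.sqrt ((2 * β + 1) ^ 2) from
        (Real.sqrt_sq (by linarith)).symm]
      exact Real.sqrt_lt_sqrt h4β (by nlinarith [sq_nonneg (2 * β)])
    linarith
  have hkne : kstar ≠ 0 := ne_of_gt hk0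
  have hrel : β * kstar ^ 2 + kstar - 1 = 0 := by
    rw [hk]
    field_simp
    linear_combination hs2
  have hhk : hstar = 1 - kstar := by
    rw [hh, hk]
    field_simp
    ring
  have hps : pstar = β * ξ * kstar := by
    rw [hp, hk]
    field_simp
  -- value at the star point
  have hDspos : 0 < (1 : ℝ) - (1 - kstar) ^ 2 := by
    have e : (1 : ℝ) - (1 - kstar) ^ 2 = kstar * (2 - kstar) := by ring
    rw [e]
    exact mul_pos hk0 (by linarith)
  have hDs : (1 : ℝ) - (1 - kstar) ^ 2 ≠ 0 := ne_of_gt hDspos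
  have hβξlt : β * ξ < 1 := by
    have h1c : (0:ℝ) < 1 + c := by linarith
    have h2 : β * ξ * (1 + c) < 1 * (1 + c) := by rw [hac]; linarith
    exact lt_of_mul_lt_mul_right (by linarith [h2]) h1c.le
  have hne : (1:ℝ) - β * ξ ≠ 0 := by linarith
  have hβ' : β = (1 - kstar) / kstar ^ 2 := by
    rw [eq_div_iff (by positivity)]
    linear_combination hrel
  have hc' : c = β * ξ / (1 - β * ξ) := by
    rw [eq_div_iff hne]
    linear_combination (-1 : ℝ) * hac
  have hd : kstar ^ 2 - (1 - kstar) * ξ = kstar ^ 2 * (1 - β * ξ) := by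
    rw [hβ']; field_simp
  have hdne : kstar ^ 2 - (1 - kstar) * ξ ≠ 0 := by
    rw [hd]
    have h1 : (0:ℝ) < 1 - β * ξ := by linarith
    positivity
  have hc2 : c = (1 - kstar) * ξ / (kstar ^ 2 - (1 - kstar) * ξ) := by
    rw [hc', hβ', hd, hβ']
    field_simp
  have hval : lqLagrangian ξ γ α hstar kstar pstar pstar = β * ξ * kstar := by
    unfold lqLagrangian
    rw [← hcdef, hhk, hps, hc2, hβ']
    field_simp
    ring
  refine ⟨⟨hk0, by linarith⟩, ?_, by rw [hhk]; ring⟩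
  intro h k p q hk0' hk2
  rw [hval]
  have hD : 0 < 1 - (1 - k) ^ 2 := by
    have e : (1 : ℝ) - (1 - k) ^ 2 = k * (2 - k) := by ring
    rw [e]
    exact mul_pos hk0' (by linarith)
  set D : ℝ := 1 - (1 - k) ^ 2 with hDdef
  have hDne : D ≠ 0 := ne_of_gt hD
  have hdec : lqLagrangian ξ γ α h k p q =
      β * ξ * kstar
      + (p ^ 2 + c * (1 - h - p) ^ 2 - β * ξ * (1 - h) ^ 2)
      + (h ^ 2 / D) * (q ^ 2 + c * (k - q) ^ 2 - β * ξ * k ^ 2)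
      + (ξ / D) * (β * (1 - h) ^ 2 * D + (β * k ^ 2 + 1) * h ^ 2 - β * kstar * D) := by
    unfold lqLagrangian
    rw [← hcdef, ← hDdef]
    field_simp
    ring
  have hT1 : 0 ≤ p ^ 2 + c * (1 - h - p) ^ 2 - β * ξ * (1 - h) ^ 2 := by
    refine aux_nonneg_of_mul (x := 1 + c) (by linarith)
      (u := (p - c * (1 - h - p)) ^ 2) ?_ (sq_nonneg _)
    linear_combination (-(1 - h) ^ 2) * hac
  have hT2 : 0 ≤ q ^ 2 + c * (k - q) ^ 2 - β * ξ * k ^ 2 := by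
    refine aux_nonneg_of_mul (x := 1 + c) (by linarith)
      (u := (q - c * (k - q)) ^ 2) ?_ (sq_nonneg _)
    linear_combination (-k ^ 2) * hac
  have hG : 0 ≤ β * (1 - h) ^ 2 * D + (β * k ^ 2 + 1) * h ^ 2 - β * kstar * D := by
    have hpos : 0 < β * D + (β * k ^ 2 + 1) := by positivity
    refine aux_nonneg_of_mul (x := β * D + (β * k ^ 2 + 1)) hpos
      (u := (β * (1 - h) * D - (β * k ^ 2 + 1) * h) ^ 2 + β ^ 2 * D * (k - kstar) ^ 2) ?_ ?_
    · rw [hDdef]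
      linear_combination (-(β * (1 - (1 - k) ^ 2))) * hrel
    · have h1 : 0 ≤ (β * (1 - h) * D - (β * k ^ 2 + 1) * h) ^ 2 := sq_nonneg _
      have h2 : 0 ≤ β ^ 2 * D * (k - kstar) ^ 2 := by positivity
      linarith
  have h2 : 0 ≤ (h ^ 2 / D) * (q ^ 2 + c * (k - q) ^ 2 - β * ξ * k ^ 2) :=
    mul_nonneg (div_nonneg (sq_nonneg h) hD.le) hT2
  have h3 : 0 ≤ (ξ / D) * (β * (1 - h) ^ 2 * D + (β * k ^ 2 + 1) * h ^ 2 - β * kstar * D) :=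
    mul_nonneg (div_nonneg hξ.le hD.le) hG
  linarith only [hdec, hT1, h2, h3]
end

section
/- For the one-dimensional grid (Laplacian eigenvalues α(θ)² = 2 − 2cos θ, θ ∈ [−π, π]), as γ → 0⁺: (1/2π)∫_{−π}^{π} α(θ)²/(γ + α(θ)²)² dθ = (1/(4√γ))(1 + O(γ)) and (1/2π)∫_{−π}^{π} γ²/(γ + α(θ)²)² dθ = (√γ/4)(1 + O(γ)). -/
open Real intervalIntegral

-- F1 antiderivative of 1/(γ+2-2cos θ)
lemma hasDeriv_F1 (γ : ℝ) (hγ : 0 < γ) (θ : ℝ) :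
    HasDerivAt (fun x => (x + 2 * Real.arctan
        (2 * Real.sin x / (γ + 2 + Real.sqrt (γ ^ 2 + 4 * γ) - 2 * Real.cos x)))
        / Real.sqrt (γ ^ 2 + 4 * γ))
      (1 / (γ + 2 - 2 * Real.cos θ)) θ := by
  set s := Real.sqrt (γ ^ 2 + 4 * γ) with hs
  have hs2 : s ^ 2 = γ ^ 2 + 4 * γ := Real.sq_sqrt (by positivity)
  have hs0 : 0 < s := Real.sqrt_pos.mpr (by positivity)
  have hc : Real.cos θ ≤ 1 := Real.cos_le_one θ
  have hu : 0 < γ + 2 + s - 2 * Real.cos θ := by nlinarith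
  have hd : 0 < γ + 2 - 2 * Real.cos θ := by nlinarith
  have hU : HasDerivAt (fun x => γ + 2 + s - 2 * Real.cos x) (2 * Real.sin θ) θ := by
    simpa using ((Real.hasDerivAt_cos θ).const_mul 2).const_sub (γ + 2 + s)
  have hN : HasDerivAt (fun x => 2 * Real.sin x) (2 * Real.cos θ) θ :=
    (Real.hasDerivAt_sin θ).const_mul 2
  have hg := hN.div hU hu.ne'
  have hA := hg.arctan
  have := ((hasDerivAt_id θ).add (hA.const_mul 2)).div_const s
  refine this.congr_deriv ?_; symm
  have hsin : Real.sin θ ^ 2 = 1 - Real.cos θ ^ 2 := by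
    have := Real.sin_sq_add_cos_sq θ; nlinarith
  have h1 : (0:ℝ) < 1 + (2 * Real.sin θ / (γ + 2 + s - 2 * Real.cos θ)) ^ 2 := by positivity
  field_simp
  have hX : (1 + ((fun x => 2 * Real.sin x) / fun x => γ + 2 + s - 2 * Real.cos x) θ ^ 2) *
      (γ + 2 + s - 2 * Real.cos θ) ^ 2 = (γ + 2 + s - 2 * Real.cos θ) ^ 2 + 4 * Real.sin θ ^ 2 := by
    rw [Pi.div_apply]; field_simp; ring
  linear_combination (s - (γ+2-2*Real.cos θ)) * hX + (s + (γ+2-2*Real.cos θ)) * hs2 +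
    (4*s + 4*(γ+2-2*Real.cos θ)) * hsin

noncomputable def myF2 (γ x : ℝ) : ℝ :=
  ((γ + 2) / (γ ^ 2 + 4 * γ)) *
    ((x + 2 * Real.arctan
        (2 * Real.sin x / (γ + 2 + Real.sqrt (γ ^ 2 + 4 * γ) - 2 * Real.cos x)))
      / Real.sqrt (γ ^ 2 + 4 * γ))
  + (2 * Real.sin x / (γ + 2 - 2 * Real.cos x)) / (γ ^ 2 + 4 * γ)

lemma hasDeriv_F2 (γ : ℝ) (hγ : 0 < γ) (θ : ℝ) :
    HasDerivAt (myF2 γ) (1 / (γ + 2 - 2 * Real.cos θ) ^ 2) θ := by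
  have hc : Real.cos θ ≤ 1 := Real.cos_le_one θ
  have hd : 0 < γ + 2 - 2 * Real.cos θ := by nlinarith
  have hD : HasDerivAt (fun x => γ + 2 - 2 * Real.cos x) (2 * Real.sin θ) θ := by
    simpa using ((Real.hasDerivAt_cos θ).const_mul 2).const_sub (γ + 2)
  have hN : HasDerivAt (fun x => 2 * Real.sin x) (2 * Real.cos θ) θ :=
    (Real.hasDerivAt_sin θ).const_mul 2
  have hQ := (hN.div hD hd.ne').div_const (γ ^ 2 + 4 * γ)
  have hP := (hasDeriv_F1 γ hγ θ).const_mul ((γ + 2) / (γ ^ 2 + 4 * γ))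
  have := hP.add hQ
  have hsin : Real.sin θ ^ 2 = 1 - Real.cos θ ^ 2 := by
    have := Real.sin_sq_add_cos_sq θ; nlinarith
  have hg4 : (0:ℝ) < γ ^ 2 + 4 * γ := by positivity
  refine this.congr_deriv ?_; symm
  rw [show (2 * Real.cos θ * (γ + 2 - 2 * Real.cos θ) - 2 * Real.sin θ * (2 * Real.sin θ))
      = (γ ^ 2 + 4 * γ) - (γ + 2) * (γ + 2 - 2 * Real.cos θ) from by linear_combination (-4)*hsin]
  field_simp
  ring

open intervalIntegral in
lemma int_flow (γ : ℝ) (hγ : 0 < γ) :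
    (∫ θ in (-π)..π, (2 - 2 * Real.cos θ) / (γ + (2 - 2 * Real.cos θ)) ^ 2)
      = 2 * π * (2 * γ) / Real.sqrt (γ ^ 2 + 4 * γ) ^ 3 := by
  set s := Real.sqrt (γ ^ 2 + 4 * γ) with hsdef
  have hs2 : s ^ 2 = γ ^ 2 + 4 * γ := Real.sq_sqrt (by positivity)
  have hs0 : 0 < s := Real.sqrt_pos.mpr (by positivity)
  have hderiv : ∀ θ ∈ Set.uIcc (-π) π, HasDerivAt
      (fun x => (x + 2 * Real.arctan
          (2 * Real.sin x / (γ + 2 + Real.sqrt (γ ^ 2 + 4 * γ) - 2 * Real.cos x)))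
          / Real.sqrt (γ ^ 2 + 4 * γ) - γ * myF2 γ x)
      ((2 - 2 * Real.cos θ) / (γ + (2 - 2 * Real.cos θ)) ^ 2) θ := by
    intro θ _
    have h := (hasDeriv_F1 γ hγ θ).sub ((hasDeriv_F2 γ hγ θ).const_mul γ)
    refine h.congr_deriv ?_; symm
    have hc : Real.cos θ ≤ 1 := Real.cos_le_one θ
    have hd : 0 < γ + 2 - 2 * Real.cos θ := by nlinarith
    rw [show γ + (2 - 2 * Real.cos θ) = γ + 2 - 2 * Real.cos θ by ring]
    field_simp
    ring
  have hcont : Continuous (fun θ : ℝ => (2 - 2 * Real.cos θ) / (γ + (2 - 2 * Real.cos θ)) ^ 2) := by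
    apply Continuous.div (by continuity) (by continuity)
    intro x
    have hc : Real.cos x ≤ 1 := Real.cos_le_one x
    have : 0 < γ + (2 - 2 * Real.cos x) := by nlinarith
    positivity
  rw [integral_eq_sub_of_hasDerivAt hderiv (hcont.intervalIntegrable _ _)]
  simp only [myF2, Real.sin_pi, Real.sin_neg, Real.cos_pi, Real.cos_neg, neg_zero,
    Real.arctan_zero]
  rw [← hsdef]
  field_simp
  linear_combination (4*π+16*π*γ^2+4*π*γ^3-4*π*γ*(γ^2+4*γ)) * hs2

open intervalIntegral in
lemma int_waste (γ : ℝ) (hγ : 0 < γ) :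
    (∫ θ in (-π)..π, γ ^ 2 / (γ + (2 - 2 * Real.cos θ)) ^ 2)
      = 2 * π * (γ ^ 2 * (γ + 2)) / Real.sqrt (γ ^ 2 + 4 * γ) ^ 3 := by
  set s := Real.sqrt (γ ^ 2 + 4 * γ) with hsdef
  have hs2 : s ^ 2 = γ ^ 2 + 4 * γ := Real.sq_sqrt (by positivity)
  have hs0 : 0 < s := Real.sqrt_pos.mpr (by positivity)
  have hderiv : ∀ θ ∈ Set.uIcc (-π) π, HasDerivAt
      (fun x => γ ^ 2 * myF2 γ x)
      (γ ^ 2 / (γ + (2 - 2 * Real.cos θ)) ^ 2) θ := by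
    intro θ _
    have h := (hasDeriv_F2 γ hγ θ).const_mul (γ ^ 2)
    refine h.congr_deriv ?_; symm
    rw [show γ + (2 - 2 * Real.cos θ) = γ + 2 - 2 * Real.cos θ by ring]
    ring
  have hcont : Continuous (fun θ : ℝ => γ ^ 2 / (γ + (2 - 2 * Real.cos θ)) ^ 2) := by
    apply Continuous.div (by continuity) (by continuity)
    intro x
    have hc : Real.cos x ≤ 1 := Real.cos_le_one x
    have : 0 < γ + (2 - 2 * Real.cos x) := by nlinarith
    positivity
  rw [integral_eq_sub_of_hasDerivAt hderiv (hcont.intervalIntegrable _ _)]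
  simp only [myF2, Real.sin_pi, Real.sin_neg, Real.cos_pi, Real.cos_neg, neg_zero,
    Real.arctan_zero]
  rw [← hsdef]
  field_simp
  linear_combination (2*π*γ+4*π) * hs2



/-- **1-D Parseval integrals, no storage.** With `α(θ)² = 2 - 2cos θ`, as `γ → 0⁺`:
`(1/2π) ∫_{-π}^{π} α²/(γ+α²)² dθ = (1/(4√γ))(1 + O(γ))` and
`(1/2π) ∫_{-π}^{π} γ²/(γ+α²)² dθ = (√γ/4)(1 + O(γ))`. -/
theorem oneD_noStorage_variances :
    ∃ c δ : ℝ, 0 < c ∧ 0 < δ ∧ ∀ γ : ℝ, 0 < γ → γ < δ →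
      |(1 / (2 * π)) * (∫ θ in (-π)..π,
          (2 - 2 * Real.cos θ) / (γ + (2 - 2 * Real.cos θ)) ^ 2)
        - 1 / (4 * Real.sqrt γ)| ≤ c * γ * (1 / (4 * Real.sqrt γ)) ∧
      |(1 / (2 * π)) * (∫ θ in (-π)..π,
          γ ^ 2 / (γ + (2 - 2 * Real.cos θ)) ^ 2)
        - Real.sqrt γ / 4| ≤ c * γ * (Real.sqrt γ / 4) := by
  refine ⟨1, 1, one_pos, one_pos, fun γ hγ hγ1 => ?_⟩
  have hπ : (0:ℝ) < π := Real.pi_pos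
  set r := Real.sqrt γ with hrdef
  set t := Real.sqrt (γ + 4) with htdef
  have hr0 : 0 < r := Real.sqrt_pos.mpr hγ
  have hr2 : r ^ 2 = γ := Real.sq_sqrt hγ.le
  have ht2 : t ^ 2 = γ + 4 := Real.sq_sqrt (by linarith)
  have ht0 : 0 < t := Real.sqrt_pos.mpr (by linarith)
  have ht : 2 ≤ t := by
    rw [htdef, show (2:ℝ) = Real.sqrt 4 by
      rw [show (4:ℝ) = 2^2 by norm_num, Real.sqrt_sq (by norm_num)]]
    exact Real.sqrt_le_sqrt (by linarith)
  have ht5 : t ^ 2 ≤ 5 := by rw [ht2]; linarith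
  have hs : Real.sqrt (γ ^ 2 + 4 * γ) = r * t := by
    rw [show γ ^ 2 + 4 * γ = γ * (γ + 4) by ring, Real.sqrt_mul hγ.le, hrdef, htdef]
  rw [int_flow γ hγ, int_waste γ hγ, hs]
  constructor
  · have key : (1 / (2 * π)) * (2 * π * (2 * γ) / (r * t) ^ 3) - 1 / (4 * r)
        = (8 - t ^ 3) / (4 * t ^ 3) * (1 / r) := by
      rw [← hr2]; field_simp; ring
    rw [key, abs_mul, abs_of_nonneg (by positivity : (0:ℝ) ≤ 1 / r),
      abs_of_nonpos (div_nonpos_of_nonpos_of_nonneg (by nlinarith) (by positivity))]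
    rw [show (1:ℝ) * γ * (1 / (4 * r)) = (t ^ 2 - 4) / 4 * (1 / r) by
      rw [ht2]; field_simp; ring]
    apply mul_le_mul_of_nonneg_right _ (by positivity)
    rw [← neg_div, neg_sub, div_le_div_iff₀ (by positivity) (by norm_num)]
    nlinarith [sq_nonneg (t - 2), sq_nonneg t, mul_nonneg (sub_nonneg.2 ht) (sq_nonneg (t - 2))]
  · have key : (1 / (2 * π)) * (2 * π * (γ ^ 2 * (γ + 2)) / (r * t) ^ 3) - r / 4
        = (4 * t ^ 2 - 8 - t ^ 3) / (4 * t ^ 3) * r := by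
      rw [show γ + 2 = t ^ 2 - 2 by linarith, ← hr2]; field_simp; ring
    have hnum : 0 ≤ 4 * t ^ 2 - 8 - t ^ 3 := by
      nlinarith [mul_nonneg (sub_nonneg.2 ht) (show (0:ℝ) ≤ 4 + 2 * t - t ^ 2 by nlinarith)]
    rw [key, abs_mul, abs_of_nonneg hr0.le, abs_of_nonneg (by positivity)]
    rw [show (1:ℝ) * γ * (r / 4) = (t ^ 2 - 4) / 4 * r by rw [ht2]; ring]
    apply mul_le_mul_of_nonneg_right _ hr0.le
    rw [div_le_div_iff₀ (by positivity) (by norm_num)]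
    nlinarith [mul_nonneg (sub_nonneg.2 ht)
      (show (0:ℝ) ≤ t ^ 4 + 2 * t ^ 3 + t ^ 2 - 2 * t - 4 by nlinarith)]
end
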